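/- Every pair partition π of [p] decomposes uniquely as follows: there is a bijection π ↦ (π̂, (π_T)_{T ∈ π̂}) where π̂ is a noncrossing partition of [p] whose blocks are the unions of the crossing-connected components of π, and for each block T of π̂, π_T is a connected pair partition of T. In particular the number of blocks of π̂ equals cc(π), the number of connected components of the intersection graph of π. -/

import Mathlib

open Finset

def Crosses {n : ℕ} (V W : Finset (Fin n)) : Prop :=
  ∃ i k j l : Fin n, i < k ∧ k < j ∧ j < l ∧ i ∈ V ∧ j ∈ V ∧ k ∈ W ∧ l ∈ W

def CrossSym {n : ℕ} (V W : Finset (Fin n)) : Prop := Crosses V W ∨ Crosses W V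

def IsPartitionOn {n : ℕ} (S : Finset (Fin n)) (π : Finset (Finset (Fin n))) : Prop :=
  (∀ V ∈ π, V.Nonempty ∧ V ⊆ S) ∧ ∀ i ∈ S, ∃! V, V ∈ π ∧ i ∈ V

def IsPairPartitionOn {n : ℕ} (S : Finset (Fin n)) (π : Finset (Finset (Fin n))) : Prop :=
  IsPartitionOn S π ∧ ∀ V ∈ π, V.card = 2

def IsPairPartition (n : ℕ) (π : Finset (Finset (Fin n))) : Prop :=
  IsPairPartitionOn Finset.univ π

def NoncrossingPart {n : ℕ} (π : Finset (Finset (Fin n))) : Prop :=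
  ∀ V ∈ π, ∀ W ∈ π, V ≠ W → ¬ CrossSym V W

def interGraph {n : ℕ} (π : Finset (Finset (Fin n))) :
    SimpleGraph {V : Finset (Fin n) // V ∈ π} where
  Adj V W := V ≠ W ∧ CrossSym V.1 W.1
  symm := by
    constructor
    rintro V W ⟨h1, h2⟩
    exact ⟨h1.symm, h2.symm⟩
  loopless := by constructor; rintro V ⟨h1, _⟩; exact h1 rfl

noncomputable def ccCount {n : ℕ} (π : Finset (Finset (Fin n))) : ℕ :=
  Nat.card (interGraph π).ConnectedComponent

def IsBipartitePart {n : ℕ} (π : Finset (Finset (Fin n))) : Prop :=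
  (interGraph π).Colorable 2

def IsConnectedPart {n : ℕ} (π : Finset (Finset (Fin n))) : Prop :=
  (interGraph π).Connected

open scoped Classical in
noncomputable def crBlocks {n : ℕ} (π : Finset (Finset (Fin n))) : Finset (Finset (Fin n)) :=
  π.filter (fun V => ∃ W ∈ π, W ≠ V ∧ CrossSym V W)

open scoped Classical in
noncomputable def ncrBlocks {n : ℕ} (π : Finset (Finset (Fin n))) : Finset (Finset (Fin n)) :=
  π.filter (fun V => ¬ ∃ W ∈ π, W ≠ V ∧ CrossSym V W)

noncomputable def crCount {n : ℕ} (π : Finset (Finset (Fin n))) : ℕ := (crBlocks π).card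
noncomputable def ncrCount {n : ℕ} (π : Finset (Finset (Fin n))) : ℕ := (ncrBlocks π).card

open scoped Classical in
noncomputable def compPart {n : ℕ} (π : Finset (Finset (Fin n))) : Finset (Finset (Fin n)) :=
  π.attach.image fun V => Finset.univ.filter fun i : Fin n =>
    ∃ W, ∃ hW : W ∈ π, i ∈ W ∧ (interGraph π).Reachable V ⟨W, hW⟩

def restrictPart {n : ℕ} (π : Finset (Finset (Fin n))) (T : Finset (Fin n)) :
    Finset (Finset (Fin n)) :=
  π.filter (· ⊆ T)

open scoped Classical in
noncomputable def pairPartitions (n : ℕ) : Finset (Finset (Finset (Fin n))) :=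
  Finset.univ.filter (IsPairPartition n)

open scoped Classical in
noncomputable def biPairPartitions (n : ℕ) : Finset (Finset (Finset (Fin n))) :=
  (pairPartitions n).filter IsBipartitePart

open scoped Classical in
noncomputable def biconPairPartitions (n : ℕ) : Finset (Finset (Finset (Fin n))) :=
  (biPairPartitions n).filter IsConnectedPart

open scoped Classical in
noncomputable def ncPairPartitions (n : ℕ) : Finset (Finset (Finset (Fin n))) :=
  (pairPartitions n).filter NoncrossingPart

open scoped Classical in
noncomputable def ncPartitions (n : ℕ) : Finset (Finset (Finset (Fin n))) :=
  Finset.univ.filter (fun π => IsPartitionOn Finset.univ π ∧ NoncrossingPart π)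

section Aux
open scoped Classical

variable {p : ℕ}

/-- `x` lies strictly between two elements of `B`. -/
def inb (B : Finset (Fin p)) (x : Fin p) : Prop :=
  (∃ a ∈ B, a < x) ∧ (∃ b ∈ B, x < b)

lemma crosses_mono {V W V' W' : Finset (Fin p)} (h : Crosses V W)
    (hV : V ⊆ V') (hW : W ⊆ W') : Crosses V' W' := by
  obtain ⟨i, k, j, l, h1, h2, h3, hi, hj, hk, hl⟩ := h
  exact ⟨i, k, j, l, h1, h2, h3, hV hi, hV hj, hW hk, hW hl⟩

lemma no_self_cross {B : Finset (Fin p)} (hB : B.card = 2) : ¬ Crosses B B := by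
  rintro ⟨i, k, j, l, h1, h2, h3, hi, hj, hk, hl⟩
  have hsub : ({i, k, j} : Finset (Fin p)) ⊆ B := by
    intro x hx; simp at hx; rcases hx with rfl | rfl | rfl <;> assumption
  have hcard : ({i, k, j} : Finset (Fin p)).card = 3 := by
    rw [Finset.card_insert_of_notMem, Finset.card_insert_of_notMem, Finset.card_singleton]
    · simp; exact h2.ne
    · simp; exact ⟨h1.ne, (h1.trans h2).ne⟩
  have := Finset.card_le_card hsub
  omega

lemma blocks_disjoint {S : Finset (Fin p)} {π : Finset (Finset (Fin p))}
    (hπ : IsPartitionOn S π) {V W : Finset (Fin p)} (hV : V ∈ π) (hW : W ∈ π)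
    (hne : V ≠ W) {x : Fin p} (hx : x ∈ V) : x ∉ W := by
  intro hxW
  have hxS : x ∈ S := (hπ.1 V hV).2 hx
  obtain ⟨U, _, hU⟩ := hπ.2 x hxS
  exact hne ((hU V ⟨hV, hx⟩).trans (hU W ⟨hW, hxW⟩).symm)

lemma block_eq_pair {B : Finset (Fin p)} (hB : B.card = 2) {a b : Fin p}
    (ha : a ∈ B) (hb : b ∈ B) (hab : a ≠ b) : B = {a, b} := by
  have hsub : ({a, b} : Finset (Fin p)) ⊆ B := by
    intro x hx; simp at hx; rcases hx with rfl | rfl <;> assumption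
  refine (Finset.eq_of_subset_of_card_le hsub ?_).symm
  rw [Finset.card_insert_of_notMem (by simpa using hab), Finset.card_singleton, hB]

lemma not_inb_self {B : Finset (Fin p)} (hB : B.card = 2) {k : Fin p} (hk : k ∈ B) :
    ¬ inb B k := by
  rintro ⟨⟨a, ha, hak⟩, ⟨b, hb, hkb⟩⟩
  have hsub : ({a, k, b} : Finset (Fin p)) ⊆ B := by
    intro x hx; simp at hx; rcases hx with rfl | rfl | rfl <;> assumption
  have hcard : ({a, k, b} : Finset (Fin p)).card = 3 := by
    rw [Finset.card_insert_of_notMem, Finset.card_insert_of_notMem, Finset.card_singleton]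
    · simp; exact hkb.ne
    · simp; exact ⟨hak.ne, (hak.trans hkb).ne⟩
  have := Finset.card_le_card hsub
  omega

lemma inb_pair {a b x : Fin p} (hab : a < b) :
    inb ({a, b} : Finset (Fin p)) x ↔ a < x ∧ x < b := by
  constructor
  · rintro ⟨⟨c, hc, hcx⟩, ⟨d, hd, hxd⟩⟩
    simp at hc hd
    constructor
    · rcases hc with rfl | rfl
      · exact hcx
      · exact hab.trans hcx
    · rcases hd with rfl | rfl
      · exact hxd.trans hab
      · exact hxd
  · rintro ⟨h1, h2⟩
    exact ⟨⟨a, by simp, h1⟩, ⟨b, by simp, h2⟩⟩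

lemma inb_between {B : Finset (Fin p)} {i j x : Fin p}
    (hi : inb B i) (hj : inb B j) (h1 : i ≤ x) (h2 : x ≤ j) : inb B x := by
  obtain ⟨⟨a, ha, hai⟩, _⟩ := hi
  obtain ⟨_, ⟨b, hb, hjb⟩⟩ := hj
  exact ⟨⟨a, ha, lt_of_lt_of_le hai h1⟩, ⟨b, hb, lt_of_le_of_lt h2 hjb⟩⟩

end Aux
section Aux2
variable {p : ℕ}

/-- Within a block that doesn't cross `B`, the `inb B` status is constant. -/
lemma const_block {π : Finset (Finset (Fin p))} (hπ : IsPairPartition p π)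
    {B U : Finset (Fin p)} (hB : B ∈ π) (hU : U ∈ π) (hnc : ¬ CrossSym B U)
    {k l : Fin p} (hk : k ∈ U) (hl : l ∈ U) : inb B k ↔ inb B l := by
  have hcardB := hπ.2 B hB
  by_cases hBU : B = U
  · subst hBU
    simp [not_inb_self hcardB hk, not_inb_self hcardB hl]
  · -- B and U disjoint
    have hkB : k ∉ B := fun h => blocks_disjoint hπ.1 hB hU hBU h hk
    have hlB : l ∉ B := fun h => blocks_disjoint hπ.1 hB hU hBU h hl
    have key : ∀ x y : Fin p, x ∈ U → y ∈ U → y ∉ B → inb B x → inb B y := by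
      rintro x y hx hy hyB ⟨⟨a, ha, hax⟩, ⟨b, hb, hxb⟩⟩
      have hab : a < b := hax.trans hxb
      have hBab : B = {a, b} := block_eq_pair hcardB ha hb hab.ne
      by_contra hny
      rw [hBab, inb_pair hab] at hny
      push_neg at hny
      have hya : y ≠ a := fun h => hyB (h ▸ ha)
      have hyb : y ≠ b := fun h => hyB (h ▸ hb)
      by_cases hyalt : a < y
      · -- then b ≤ y, so b < y : a < x < b < y : Crosses B U
        have hby : b < y := lt_of_le_of_ne (hny hyalt) hyb.symm
        exact hnc (Or.inl ⟨a, x, b, y, hax, hxb, hby, ha, hb, hx, hy⟩)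
      · have hya' : y < a := lt_of_le_of_ne (not_lt.mp hyalt) hya
        -- y < a < x < b : Crosses U B
        exact hnc (Or.inr ⟨y, a, x, b, hya', hax, hxb, hy, hx, ha, hb⟩)
    constructor
    · exact key k l hk hl hlB
    · exact key l k hl hk hkB

/-- Crossing blocks on which `inb B` is blockwise constant have equal status. -/
lemma cross_step {B U U' : Finset (Fin p)}
    (hU : ∀ x ∈ U, ∀ y ∈ U, inb B x ↔ inb B y)
    (hU' : ∀ x ∈ U', ∀ y ∈ U', inb B x ↔ inb B y)
    (hc : CrossSym U U') {x y : Fin p} (hx : x ∈ U) (hy : y ∈ U') :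
    inb B x ↔ inb B y := by
  rcases hc with h | h
  · obtain ⟨i, k, j, l, h1, h2, h3, hi, hj, hk, hl⟩ := h
    have main : inb B i ↔ inb B k := by
      constructor
      · intro hbi
        exact inb_between hbi ((hU i hi j hj).mp hbi) h1.le h2.le
      · intro hbk
        exact (hU i hi j hj).mpr (inb_between hbk ((hU' k hk l hl).mp hbk) h2.le h3.le)
    exact ((hU x hx i hi).trans main).trans (hU' k hk y hy)
  · obtain ⟨i, k, j, l, h1, h2, h3, hi, hj, hk, hl⟩ := h
    have main : inb B i ↔ inb B k := by
      constructor
      · intro hbi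
        exact inb_between hbi ((hU' i hi j hj).mp hbi) h1.le h2.le
      · intro hbk
        exact (hU' i hi j hj).mpr (inb_between hbk ((hU k hk l hl).mp hbk) h2.le h3.le)
    exact ((hU x hx k hk).trans main.symm).trans (hU' i hi y hy)

end Aux2
section Aux3
variable {p : ℕ}

/-- `inb B` is constant across a crossing-connected family of blocks that `B`
doesn't cross. -/
lemma inb_const_of_reachable {π : Finset (Finset (Fin p))} (hπ : IsPairPartition p π)
    {B : Finset (Fin p)} (hB : B ∈ π) :
    ∀ (V W : {V : Finset (Fin p) // V ∈ π}) (_ : (interGraph π).Walk V W),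
      (∀ X : {V : Finset (Fin p) // V ∈ π}, (interGraph π).Reachable V X → ¬ CrossSym B X.1) →
      ∀ k ∈ V.1, ∀ l ∈ W.1, (inb B k ↔ inb B l) := by
  intro V W w
  induction w with
  | @nil u =>
    intro hnc k hk l hl
    exact const_block hπ hB u.2 (hnc u (SimpleGraph.Reachable.refl u)) hk hl
  | @cons A M W' hadj w ih =>
    intro hnc k hk l hl
    obtain ⟨m, hm⟩ := (hπ.1.1 M.1 M.2).1
    have hcA : ∀ x ∈ A.1, ∀ y ∈ A.1, (inb B x ↔ inb B y) := fun x hx y hy =>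
      const_block hπ hB A.2 (hnc _ (SimpleGraph.Reachable.refl _)) hx hy
    have hcM : ∀ x ∈ M.1, ∀ y ∈ M.1, (inb B x ↔ inb B y) := fun x hx y hy =>
      const_block hπ hB M.2 (hnc _ hadj.reachable) hx hy
    have h1 : inb B k ↔ inb B m := cross_step hcA hcM hadj.2 hk hm
    exact h1.trans (ih (fun X hX => hnc X (hadj.reachable.trans hX)) m hm l hl)

/-- Transfer reachability from a subfamily to the ambient family. -/
lemma reachable_up {π ρ : Finset (Finset (Fin p))} (hsub : ∀ X ∈ ρ, X ∈ π) :
    ∀ (A B : {V : Finset (Fin p) // V ∈ ρ}) (_ : (interGraph ρ).Walk A B),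
      (interGraph π).Reachable ⟨A.1, hsub A.1 A.2⟩ ⟨B.1, hsub B.1 B.2⟩ := by
  intro A B w
  induction w with
  | nil => exact SimpleGraph.Reachable.refl _
  | @cons A M B' hadj w ih =>
    have hA : (interGraph π).Adj ⟨A.1, hsub A.1 A.2⟩ ⟨M.1, hsub M.1 M.2⟩ := by
      refine ⟨fun h => hadj.1 (by injection h with h'; exact Subtype.ext h'), hadj.2⟩
    exact hA.reachable.trans ih

/-- Transfer reachability from the ambient family down to a crossing-closed
subfamily. -/
lemma reachable_down {π ρ : Finset (Finset (Fin p))} (hsub : ∀ X ∈ ρ, X ∈ π)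
    (hclosed : ∀ (X Y : {V : Finset (Fin p) // V ∈ π}), X.1 ∈ ρ →
      (interGraph π).Adj X Y → Y.1 ∈ ρ) :
    ∀ (A B : {V : Finset (Fin p) // V ∈ π}) (_ : (interGraph π).Walk A B)
      (hA : A.1 ∈ ρ) (hB : B.1 ∈ ρ),
      (interGraph ρ).Reachable ⟨A.1, hA⟩ ⟨B.1, hB⟩ := by
  intro A B w
  induction w with
  | nil => intro hA hB; exact SimpleGraph.Reachable.refl _
  | @cons A M B' hadj w ih =>
    intro hA hB
    have hM : M.1 ∈ ρ := hclosed A M hA hadj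
    have hAdj : (interGraph ρ).Adj ⟨A.1, hA⟩ ⟨M.1, hM⟩ :=
      ⟨fun h => hadj.1 (by injection h with h'; exact Subtype.ext h'), hadj.2⟩
    exact hAdj.reachable.trans (ih hM hB)

end Aux3
section Comp
open scoped Classical

variable {p : ℕ}

noncomputable def cset (π : Finset (Finset (Fin p)))
    (V : {V : Finset (Fin p) // V ∈ π}) : Finset (Fin p) :=
  Finset.univ.filter fun i : Fin p =>
    ∃ W, ∃ hW : W ∈ π, i ∈ W ∧ (interGraph π).Reachable V ⟨W, hW⟩

variable {π : Finset (Finset (Fin p))}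

lemma compPart_eq : compPart π = π.attach.image (cset π) := rfl

lemma mem_cset {V : {V : Finset (Fin p) // V ∈ π}} {i : Fin p} :
    i ∈ cset π V ↔ ∃ W, ∃ hW : W ∈ π, i ∈ W ∧ (interGraph π).Reachable V ⟨W, hW⟩ := by
  simp [cset]

lemma mem_compPart {C : Finset (Fin p)} :
    C ∈ compPart π ↔ ∃ V, C = cset π V := by
  rw [compPart_eq, Finset.mem_image]
  simp [eq_comm]

lemma block_unique (hπ : IsPairPartition p π) {V W : Finset (Fin p)}
    (hV : V ∈ π) (hW : W ∈ π) {i : Fin p} (hiV : i ∈ V) (hiW : i ∈ W) : V = W := by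
  obtain ⟨U, _, hU⟩ := hπ.1.2 i (Finset.mem_univ i)
  exact (hU V ⟨hV, hiV⟩).trans (hU W ⟨hW, hiW⟩).symm

lemma cset_congr {V V' : {V : Finset (Fin p) // V ∈ π}}
    (h : (interGraph π).Reachable V V') : cset π V = cset π V' := by
  ext i
  simp only [mem_cset]
  constructor
  · rintro ⟨W, hW, hi, hr⟩; exact ⟨W, hW, hi, h.symm.trans hr⟩
  · rintro ⟨W, hW, hi, hr⟩; exact ⟨W, hW, hi, h.trans hr⟩

lemma subset_cset (V : {V : Finset (Fin p) // V ∈ π}) : V.1 ⊆ cset π V := fun x hx =>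
  mem_cset.mpr ⟨V.1, V.2, hx, SimpleGraph.Reachable.refl V⟩

lemma mem_cset_iff_block (hπ : IsPairPartition p π) {V : {V : Finset (Fin p) // V ∈ π}}
    {i : Fin p} {W : Finset (Fin p)} (hW : W ∈ π) (hiW : i ∈ W) :
    i ∈ cset π V ↔ (interGraph π).Reachable V ⟨W, hW⟩ := by
  constructor
  · intro h
    obtain ⟨W', hW', hi', hr⟩ := mem_cset.mp h
    obtain rfl : W' = W := block_unique hπ hW' hW hi' hiW
    exact hr
  · intro h; exact mem_cset.mpr ⟨W, hW, hiW, h⟩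

end Comp
section Comp2
open scoped Classical

variable {p : ℕ} {π : Finset (Finset (Fin p))}

lemma reachable_of_cset_eq (hπ : IsPairPartition p π)
    {V V' : {V : Finset (Fin p) // V ∈ π}} (h : cset π V = cset π V') :
    (interGraph π).Reachable V V' := by
  obtain ⟨x, hx⟩ := (hπ.1.1 V.1 V.2).1
  have hx' : x ∈ cset π V' := h ▸ subset_cset V hx
  have : (interGraph π).Reachable V' ⟨V.1, V.2⟩ :=
    (mem_cset_iff_block hπ V.2 hx).mp hx'
  exact this.symm

lemma block_subset_cset_iff (hπ : IsPairPartition p π) {U : Finset (Fin p)} (hU : U ∈ π)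
    {V : {V : Finset (Fin p) // V ∈ π}} :
    U ⊆ cset π V ↔ (interGraph π).Reachable V ⟨U, hU⟩ := by
  constructor
  · intro h
    obtain ⟨x, hx⟩ := (hπ.1.1 U hU).1
    exact (mem_cset_iff_block hπ hU hx).mp (h hx)
  · intro h x hx
    exact mem_cset.mpr ⟨U, hU, hx, h⟩

/-- The fundamental noncrossing property of connected components. -/
lemma crosses_cset (hπ : IsPairPartition p π)
    {V V' : {V : Finset (Fin p) // V ∈ π}} (hnr : ¬ (interGraph π).Reachable V V') :
    ¬ Crosses (cset π V) (cset π V') := by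
  rintro ⟨i, k, j, l, h1, h2, h3, hi, hj, hk, hl⟩
  obtain ⟨Bi, hBi, hiBi, hri⟩ := mem_cset.mp hi
  obtain ⟨Bj, hBj, hjBj, hrj⟩ := mem_cset.mp hj
  obtain ⟨K, hK, hkK, hrk⟩ := mem_cset.mp hk
  obtain ⟨L, hL, hlL, hrl⟩ := mem_cset.mp hl
  -- dichotomy : every block reachable from V is inside (k,l) or outside [k,l]
  have dich : ∀ (U : {V : Finset (Fin p) // V ∈ π}), (interGraph π).Reachable V U →
      (∀ x ∈ U.1, k < x ∧ x < l) ∨ (∀ x ∈ U.1, x < k ∨ l < x) := by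
    intro U hU
    have hV'U : ∀ X : {V : Finset (Fin p) // V ∈ π},
        (interGraph π).Reachable V' X → (interGraph π).Reachable V' U → False := by
      intro X hX hV'U
      exact hnr (hU.trans hV'U.symm)
    have hnc : ∀ X : {V : Finset (Fin p) // V ∈ π},
        (interGraph π).Reachable ⟨K, hK⟩ X → ¬ CrossSym U.1 X.1 := by
      intro X hX hcross
      have hX' : (interGraph π).Reachable V' X := hrk.trans hX
      by_cases hUX : U = X
      · exact hnr (hU.trans (hUX ▸ hX').symm)
      · have hUX1 : U.1 ≠ X.1 := fun h => hUX (Subtype.ext h)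
        have : (interGraph π).Reachable V' U :=
          hX'.trans (SimpleGraph.Adj.reachable ⟨fun h => hUX1 (congrArg Subtype.val h.symm), hcross.symm⟩)
        exact hnr (hU.trans this.symm)
    have hconst : inb U.1 k ↔ inb U.1 l := by
      obtain ⟨w⟩ := hrk.symm.trans hrl
      exact inb_const_of_reachable hπ U.2 ⟨K, hK⟩ ⟨L, hL⟩ w hnc k hkK l hlL
    have hkU : k ∉ U.1 := by
      intro hkU
      have : U.1 = K := block_unique hπ U.2 hK hkU hkK
      exact hnr (hU.trans (by rw [show U = (⟨K, hK⟩ : {V : Finset (Fin p) // V ∈ π}) from Subtype.ext this] at hU ⊢; exact hrk.symm))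
    have hlU : l ∉ U.1 := by
      intro hlU
      have : U.1 = L := block_unique hπ U.2 hL hlU hlL
      exact hnr (hU.trans (by rw [show U = (⟨L, hL⟩ : {V : Finset (Fin p) // V ∈ π}) from Subtype.ext this] at hU ⊢; exact hrl.symm))
    -- no mixing
    by_cases hmix : ∃ x ∈ U.1, k < x ∧ x < l
    · left
      obtain ⟨x, hxU, hxin⟩ := hmix
      intro y hyU
      by_contra hy
      push_neg at hy
      have hxy : x ≠ y := by rintro rfl; exact absurd (hy hxin.1) (not_le.mpr hxin.2)
      have hUxy : U.1 = {x, y} := block_eq_pair (hπ.2 U.1 U.2) hxU hyU hxy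
      have hynk : y ≠ k := fun h => hkU (h ▸ hyU)
      have hynl : y ≠ l := fun h => hlU (h ▸ hyU)
      have hkl : k < l := h2.trans h3
      rcases lt_trichotomy y k with hyk | rfl | hky
      · -- y < k < x < l : inb U k true, inb U l must be true, but all elts < l
        have hki : inb U.1 k := ⟨⟨y, hyU, hyk⟩, ⟨x, hxU, hxin.1⟩⟩
        obtain ⟨_, ⟨d, hdU, hld⟩⟩ := hconst.mp hki
        rw [hUxy] at hdU
        simp at hdU
        rcases hdU with rfl | rfl
        · exact absurd hxin.2 (lt_asymm hld)
        · exact absurd (hyk.trans hkl) (lt_asymm hld)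
      · exact hynk rfl
      · -- k < y ; since ¬(k<y ∧ y<l), l ≤ y, y ≠ l so l < y : inb U l true, inb U k false
        have hly : l < y := lt_of_le_of_ne (hy hky) (Ne.symm hynl)
        have hli : inb U.1 l := ⟨⟨x, hxU, hxin.2⟩, ⟨y, hyU, hly⟩⟩
        obtain ⟨⟨c, hcU, hck⟩, _⟩ := hconst.mpr hli
        rw [hUxy] at hcU
        simp at hcU
        rcases hcU with rfl | rfl
        · exact absurd hxin.1 (lt_asymm hck)
        · exact absurd hky (lt_asymm hck)
    · right
      push_neg at hmix
      intro x hxU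
      have hxk : x ≠ k := fun h => hkU (h ▸ hxU)
      have hxl : x ≠ l := fun h => hlU (h ▸ hxU)
      rcases lt_trichotomy x k with h | rfl | h
      · exact Or.inl h
      · exact absurd rfl hxk
      · exact Or.inr (lt_of_le_of_ne (hmix x hxU h) (Ne.symm hxl))
  -- B_j is inside, B_i is outside
  have hBjIn : ∀ x ∈ Bj, k < x ∧ x < l := by
    rcases dich ⟨Bj, hBj⟩ hrj with h | h
    · exact h
    · rcases h j hjBj with h' | h'
      · exact absurd h2 (lt_asymm h')
      · exact absurd h3 (lt_asymm h')
  have hBiOut : ∀ x ∈ Bi, x < k ∨ l < x := by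
    rcases dich ⟨Bi, hBi⟩ hri with h | h
    · exact absurd h1 (lt_asymm (h i hiBi).1)
    · exact h
  -- walk from Bj to Bi : impossible since inside blocks never cross outside ones
  have key : ∀ (A B : {V : Finset (Fin p) // V ∈ π}) (_ : (interGraph π).Walk A B),
      (interGraph π).Reachable V A → (∀ x ∈ A.1, k < x ∧ x < l) →
      (∀ x ∈ B.1, x < k ∨ l < x) → False := by
    intro A B w
    induction w with
    | @nil u =>
      intro _ hIn hOut
      obtain ⟨x, hx⟩ := (hπ.1.1 u.1 u.2).1
      rcases hOut x hx with h | h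
      · exact absurd (hIn x hx).1 (lt_asymm h)
      · exact absurd (hIn x hx).2 (lt_asymm h)
    | @cons A M B' hadj w ih =>
      intro hrA hIn hOut
      have hrM : (interGraph π).Reachable V M := hrA.trans hadj.reachable
      rcases dich M hrM with hM | hM
      · exact ih hrM hM hOut
      · rcases hadj.2 with hc | hc
        · obtain ⟨i', k', j', l', g1, g2, g3, hi', hj', hk', hl'⟩ := hc
          rcases hM k' hk' with h | h
          · exact absurd ((hIn i' hi').1.trans g1) (lt_asymm h)
          · exact absurd (g2.trans (hIn j' hj').2) (lt_asymm h)
        · obtain ⟨i', k', j', l', g1, g2, g3, hi', hj', hk', hl'⟩ := hc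
          rcases hM j' hj' with h | h
          · exact absurd ((hIn k' hk').1.trans g2) (lt_asymm h)
          · exact absurd (g3.trans (hIn l' hl').2) (lt_asymm h)
  obtain ⟨w⟩ := hrj.symm.trans hri
  exact key ⟨Bj, hBj⟩ ⟨Bi, hBi⟩ w hrj hBjIn hBiOut

end Comp2
section Part1
open scoped Classical

variable {p : ℕ} {π : Finset (Finset (Fin p))}

lemma compPart_isPartition (hπ : IsPairPartition p π) :
    IsPartitionOn Finset.univ (compPart π) := by
  constructor
  · intro C hC
    obtain ⟨V, rfl⟩ := mem_compPart.mp hC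
    obtain ⟨x, hx⟩ := (hπ.1.1 V.1 V.2).1
    exact ⟨⟨x, subset_cset V hx⟩, Finset.subset_univ _⟩
  · intro i _
    obtain ⟨B, ⟨hB, hiB⟩, huniq⟩ := hπ.1.2 i (Finset.mem_univ i)
    refine ⟨cset π ⟨B, hB⟩, ⟨mem_compPart.mpr ⟨⟨B, hB⟩, rfl⟩, subset_cset _ hiB⟩, ?_⟩
    rintro C ⟨hC, hiC⟩
    obtain ⟨V', rfl⟩ := mem_compPart.mp hC
    obtain ⟨W, hW, hiW, hr⟩ := mem_cset.mp hiC
    obtain rfl : W = B := block_unique hπ hW hB hiW hiB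
    exact cset_congr hr

lemma compPart_noncrossing (hπ : IsPairPartition p π) : NoncrossingPart (compPart π) := by
  intro C hC D hD hne hcross
  obtain ⟨V, rfl⟩ := mem_compPart.mp hC
  obtain ⟨V', rfl⟩ := mem_compPart.mp hD
  have hnr : ¬ (interGraph π).Reachable V V' := fun h => hne (cset_congr h)
  rcases hcross with h | h
  · exact crosses_cset hπ hnr h
  · exact crosses_cset hπ (fun h' => hnr h'.symm) h

lemma restrict_isPairPartition (hπ : IsPairPartition p π)
    (V : {V : Finset (Fin p) // V ∈ π}) :
    IsPairPartitionOn (cset π V) (restrictPart π (cset π V)) := by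
  refine ⟨⟨?_, ?_⟩, ?_⟩
  · intro U hU
    rw [restrictPart, Finset.mem_filter] at hU
    exact ⟨(hπ.1.1 U hU.1).1, hU.2⟩
  · intro i hi
    obtain ⟨W, hW, hiW, hr⟩ := mem_cset.mp hi
    refine ⟨W, ⟨Finset.mem_filter.mpr ⟨hW, (block_subset_cset_iff hπ hW).mpr hr⟩, hiW⟩, ?_⟩
    rintro U ⟨hU, hiU⟩
    rw [restrictPart, Finset.mem_filter] at hU
    exact block_unique hπ hU.1 hW hiU hiW
  · intro U hU
    rw [restrictPart, Finset.mem_filter] at hU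
    exact hπ.2 U hU.1

lemma restrict_connected (hπ : IsPairPartition p π)
    (V : {V : Finset (Fin p) // V ∈ π}) :
    IsConnectedPart (restrictPart π (cset π V)) := by
  rw [IsConnectedPart, SimpleGraph.connected_iff]
  have hmemV : V.1 ∈ restrictPart π (cset π V) :=
    Finset.mem_filter.mpr ⟨V.2, subset_cset V⟩
  have hsub : ∀ X ∈ restrictPart π (cset π V), X ∈ π := fun X hX =>
    (Finset.mem_filter.mp hX).1
  have hclosed : ∀ (X Y : {W : Finset (Fin p) // W ∈ π}),
      X.1 ∈ restrictPart π (cset π V) → (interGraph π).Adj X Y →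
      Y.1 ∈ restrictPart π (cset π V) := by
    intro X Y hX hadj
    have hrX : (interGraph π).Reachable V ⟨X.1, X.2⟩ :=
      (block_subset_cset_iff hπ X.2).mp (Finset.mem_filter.mp hX).2
    have hrY : (interGraph π).Reachable V Y := hrX.trans hadj.reachable
    exact Finset.mem_filter.mpr ⟨Y.2, (block_subset_cset_iff hπ Y.2).mpr hrY⟩
  constructor
  · intro A B
    have hrA : (interGraph π).Reachable V ⟨A.1, hsub A.1 A.2⟩ :=
      (block_subset_cset_iff hπ (hsub A.1 A.2)).mp (Finset.mem_filter.mp A.2).2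
    have hrB : (interGraph π).Reachable V ⟨B.1, hsub B.1 B.2⟩ :=
      (block_subset_cset_iff hπ (hsub B.1 B.2)).mp (Finset.mem_filter.mp B.2).2
    obtain ⟨w⟩ := hrA.symm.trans hrB
    have := reachable_down hsub hclosed ⟨A.1, hsub A.1 A.2⟩ ⟨B.1, hsub B.1 B.2⟩ w A.2 B.2
    simpa using this
  · exact ⟨⟨V.1, hmemV⟩⟩

lemma compPart_card (hπ : IsPairPartition p π) : (compPart π).card = ccCount π := by
  classical
  set f : (interGraph π).ConnectedComponent → Finset (Fin p) :=
    SimpleGraph.ConnectedComponent.lift (cset π) (fun v w q _ => cset_congr ⟨q⟩) with hf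
  have hfmk : ∀ v, f ((interGraph π).connectedComponentMk v) = cset π v := fun v => rfl
  have hmem : ∀ c, f c ∈ compPart π := by
    refine SimpleGraph.ConnectedComponent.ind ?_
    intro v
    exact mem_compPart.mpr ⟨v, (hfmk v).symm⟩
  have hbij : Function.Bijective (fun c => (⟨f c, hmem c⟩ :
      {C : Finset (Fin p) // C ∈ compPart π})) := by
    constructor
    · refine SimpleGraph.ConnectedComponent.ind₂ ?_
      intro v w h
      have : cset π v = cset π w := by
        simpa [hfmk] using congrArg Subtype.val h
      exact SimpleGraph.ConnectedComponent.sound (reachable_of_cset_eq hπ this)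
    · rintro ⟨C, hC⟩
      obtain ⟨V, rfl⟩ := mem_compPart.mp hC
      exact ⟨(interGraph π).connectedComponentMk V, Subtype.ext (hfmk V)⟩
  have := Nat.card_eq_of_bijective _ hbij
  rw [ccCount, this, Nat.card_eq_finsetCard]

end Part1
section Part2
open scoped Classical

variable {p : ℕ}

lemma reach_closed {π ρ : Finset (Finset (Fin p))}
    (hclosed : ∀ (X Y : {V : Finset (Fin p) // V ∈ π}), X.1 ∈ ρ →
      (interGraph π).Adj X Y → Y.1 ∈ ρ) :
    ∀ (A B : {V : Finset (Fin p) // V ∈ π}) (_ : (interGraph π).Walk A B),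
      A.1 ∈ ρ → B.1 ∈ ρ := by
  intro A B w
  induction w with
  | nil => exact id
  | @cons A M B' hadj w ih => intro hA; exact ih (hclosed A M hA hadj)

lemma decomposition_injective {π π' : Finset (Finset (Fin p))}
    (hπ : IsPairPartition p π) (hπ' : IsPairPartition p π')
    (hcomp : compPart π = compPart π')
    (hres : ∀ T ∈ compPart π, restrictPart π T = restrictPart π' T) : π = π' := by
  ext U
  constructor
  · intro hU
    have hT : cset π ⟨U, hU⟩ ∈ compPart π := mem_compPart.mpr ⟨⟨U, hU⟩, rfl⟩
    have hUr : U ∈ restrictPart π (cset π ⟨U, hU⟩) :=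
      Finset.mem_filter.mpr ⟨hU, subset_cset ⟨U, hU⟩⟩
    rw [hres _ hT] at hUr
    exact (Finset.mem_filter.mp hUr).1
  · intro hU
    have hT : cset π' ⟨U, hU⟩ ∈ compPart π := by
      rw [hcomp]; exact mem_compPart.mpr ⟨⟨U, hU⟩, rfl⟩
    have hUr : U ∈ restrictPart π' (cset π' ⟨U, hU⟩) :=
      Finset.mem_filter.mpr ⟨hU, subset_cset ⟨U, hU⟩⟩
    rw [← hres _ hT] at hUr
    exact (Finset.mem_filter.mp hUr).1

end Part2
section Part3
open scoped Classical

variable {p : ℕ}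

lemma decomposition_surjective (σ : Finset (Finset (Fin p)))
    (g : Finset (Fin p) → Finset (Finset (Fin p)))
    (hσ : IsPartitionOn Finset.univ σ) (hnc : NoncrossingPart σ)
    (hg : ∀ T ∈ σ, IsPairPartitionOn T (g T) ∧ IsConnectedPart (g T)) :
    ∃ π : Finset (Finset (Fin p)), IsPairPartition p π ∧ compPart π = σ ∧
      ∀ T ∈ σ, restrictPart π T = g T := by
  classical
  set π : Finset (Finset (Fin p)) := σ.biUnion g with hπdef
  have hmemπ : ∀ {U : Finset (Fin p)}, U ∈ π ↔ ∃ T ∈ σ, U ∈ g T := by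
    intro U; simp [hπdef, Finset.mem_biUnion]
  have hTuniq : ∀ {T T' : Finset (Fin p)}, T ∈ σ → T' ∈ σ → ∀ {x : Fin p},
      x ∈ T → x ∈ T' → T = T' := by
    intro T T' hT hT' x hx hx'
    obtain ⟨W, _, hW⟩ := hσ.2 x (Finset.mem_univ x)
    exact (hW T ⟨hT, hx⟩).trans (hW T' ⟨hT', hx'⟩).symm
  -- π is a pair partition
  have hπpair : IsPairPartition p π := by
    refine ⟨⟨?_, ?_⟩, ?_⟩
    · intro U hU
      obtain ⟨T, hT, hUT⟩ := hmemπ.mp hU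
      exact ⟨((hg T hT).1.1.1 U hUT).1, Finset.subset_univ U⟩
    · intro i _
      obtain ⟨T, ⟨hT, hiT⟩, _⟩ := hσ.2 i (Finset.mem_univ i)
      obtain ⟨U, ⟨hU, hiU⟩, _⟩ := (hg T hT).1.1.2 i hiT
      refine ⟨U, ⟨hmemπ.mpr ⟨T, hT, hU⟩, hiU⟩, ?_⟩
      rintro U' ⟨hU', hiU'⟩
      obtain ⟨T', hT', hU'T⟩ := hmemπ.mp hU'
      have hiT' : i ∈ T' := ((hg T' hT').1.1.1 U' hU'T).2 hiU'
      obtain rfl : T' = T := hTuniq hT' hT hiT' hiT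
      obtain ⟨W, hWmem, hWuniq⟩ := (hg T' hT').1.1.2 i hiT'
      exact (hWuniq U' ⟨hU'T, hiU'⟩).trans (hWuniq U ⟨hU, hiU⟩).symm
    · intro U hU
      obtain ⟨T, hT, hUT⟩ := hmemπ.mp hU
      exact (hg T hT).1.2 U hUT
  -- crossing blocks lie in the same σ-block
  have hcrossT : ∀ {T T' U U' : Finset (Fin p)}, T ∈ σ → T' ∈ σ → U ∈ g T → U' ∈ g T' →
      CrossSym U U' → T = T' := by
    intro T T' U U' hT hT' hU hU' hc
    by_contra hne
    refine hnc T hT T' hT' hne ?_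
    rcases hc with h | h
    · exact Or.inl (crosses_mono h ((hg T hT).1.1.1 U hU).2 ((hg T' hT').1.1.1 U' hU').2)
    · exact Or.inr (crosses_mono h ((hg T' hT').1.1.1 U' hU').2 ((hg T hT).1.1.1 U hU).2)
  have hclosed : ∀ T, T ∈ σ → ∀ (X Y : {V : Finset (Fin p) // V ∈ π}), X.1 ∈ g T →
      (interGraph π).Adj X Y → Y.1 ∈ g T := by
    intro T hT X Y hX hadj
    obtain ⟨T', hT', hYT'⟩ := hmemπ.mp Y.2
    obtain rfl : T = T' := hcrossT hT hT' hX hYT' hadj.2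
    exact hYT'
  have hcset : ∀ T, T ∈ σ → ∀ U, ∀ hU : U ∈ g T, ∀ hUπ : U ∈ π,
      cset π ⟨U, hUπ⟩ = T := by
    intro T hT U hU hUπ
    apply Finset.Subset.antisymm
    · intro i hi
      obtain ⟨W, hW, hiW, hr⟩ := mem_cset.mp hi
      obtain ⟨w⟩ := hr
      have hWg : W ∈ g T := reach_closed (hclosed T hT) _ _ w hU
      exact ((hg T hT).1.1.1 W hWg).2 hiW
    · intro i hi
      obtain ⟨W, ⟨hWg, hiW⟩, _⟩ := (hg T hT).1.1.2 i hi
      have hWπ : W ∈ π := hmemπ.mpr ⟨T, hT, hWg⟩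
      have hreach : (interGraph (g T)).Reachable ⟨U, hU⟩ ⟨W, hWg⟩ :=
        (hg T hT).2.preconnected _ _
      obtain ⟨w⟩ := hreach
      have := reachable_up (fun X hX => hmemπ.mpr ⟨T, hT, hX⟩) ⟨U, hU⟩ ⟨W, hWg⟩ w
      exact mem_cset.mpr ⟨W, hWπ, hiW, this⟩
  refine ⟨π, hπpair, ?_, ?_⟩
  · ext C
    constructor
    · intro hC
      obtain ⟨V, rfl⟩ := mem_compPart.mp hC
      obtain ⟨T, hT, hVT⟩ := hmemπ.mp V.2
      have h : cset π V = T := hcset T hT V.1 hVT V.2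
      rw [h]; exact hT
    · intro hC
      obtain ⟨x, hx⟩ := (hσ.1 C hC).1
      obtain ⟨W, ⟨hWg, hxW⟩, _⟩ := (hg C hC).1.1.2 x hx
      have hWπ : W ∈ π := hmemπ.mpr ⟨C, hC, hWg⟩
      exact mem_compPart.mpr ⟨⟨W, hWπ⟩, (hcset C hC W hWg hWπ).symm⟩
  · intro T hT
    ext U
    rw [restrictPart, Finset.mem_filter]
    constructor
    · rintro ⟨hUπ, hUT⟩
      obtain ⟨T', hT', hUg⟩ := hmemπ.mp hUπ
      obtain ⟨x, hx⟩ := ((hg T' hT').1.1.1 U hUg).1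
      obtain rfl : T = T' := hTuniq hT hT' (hUT hx) (((hg T' hT').1.1.1 U hUg).2 hx)
      exact hUg
    · intro hUg
      exact ⟨hmemπ.mpr ⟨T, hT, hUg⟩, ((hg T hT).1.1.1 U hUg).2⟩

end Part3
/-- The decomposition of a pair partition into its noncrossing closure and
connected restrictions: well-definedness, injectivity and surjectivity. -/
theorem pair_partition_component_decomposition (p : ℕ) :
    -- the map π ↦ (compPart π, restrictions) lands in the right set, and |compPart π| = cc(π)
    (∀ π : Finset (Finset (Fin p)), IsPairPartition p π →
      (IsPartitionOn Finset.univ (compPart π) ∧ NoncrossingPart (compPart π) ∧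
        (∀ T ∈ compPart π,
          IsPairPartitionOn T (restrictPart π T) ∧ IsConnectedPart (restrictPart π T)) ∧
        (compPart π).card = ccCount π)) ∧
    -- injectivity
    (∀ π π' : Finset (Finset (Fin p)), IsPairPartition p π → IsPairPartition p π' →
      compPart π = compPart π' →
      (∀ T ∈ compPart π, restrictPart π T = restrictPart π' T) → π = π') ∧
    -- surjectivity
    (∀ (σ : Finset (Finset (Fin p))) (g : Finset (Fin p) → Finset (Finset (Fin p))),
      IsPartitionOn Finset.univ σ → NoncrossingPart σ →
      (∀ T ∈ σ, IsPairPartitionOn T (g T) ∧ IsConnectedPart (g T)) →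
      ∃ π : Finset (Finset (Fin p)), IsPairPartition p π ∧ compPart π = σ ∧
        ∀ T ∈ σ, restrictPart π T = g T) := by
  refine ⟨?_, ?_, ?_⟩
  · intro π hπ
    refine ⟨compPart_isPartition hπ, compPart_noncrossing hπ, ?_, compPart_card hπ⟩
    intro T hT
    obtain ⟨V, rfl⟩ := mem_compPart.mp hT
    exact ⟨restrict_isPairPartition hπ V, restrict_connected hπ V⟩
  · exact fun π π' h h' => decomposition_injective h h'
  · exact decomposition_surjective
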